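/- Let f : R^n → R be a function, Q ⊆ R^n convex closed, and suppose for each k ≥ 0 there is a convex-in-first-argument model ψ_k with ψ_k(x,x)=0 and f(x) + ψ_k(y,x) + (μ/2)‖y−x‖² − δ₁^k ≤ f(y) ≤ f(x) + ψ_k(y,x) + (L/2)‖y−x‖² + δ₂^k for all x,y ∈ Q, where L ≥ μ ≥ 0, L > 0. Let x_{k+1} = argmin_{x∈Q}[ψ_k(x,x_k) + (L/2)‖x−x_k‖²], q = 1 − μ/L, R = ‖x_0 − x_*‖, and y_N = (Σ_{i=1}^N q^{N−i})^{-1} Σ_{i=1}^N q^{N−i} x_i. If f is convex, then f(y_N) − f(x_*) ≤ min{LR²/(2N), (LR²/2)·exp(−(μ/L)N)} + (Σ_{i=1}^N q^{N−i})^{-1} Σ_{i=1}^N q^{N−i}(δ₁^{i−1} + δ₂^{i−1}). -/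

import Mathlib

lemma norm_combo {E : Type*} [NormedAddCommGroup E] [InnerProductSpace ℝ E] (a b : E) (t : ℝ) :
    ‖(1-t)•a + t•b‖^2 = (1-t)*‖a‖^2 + t*‖b‖^2 - t*(1-t)*‖a-b‖^2 := by
  have h : ∀ v : E, ‖v‖^2 = inner ℝ v v := fun v => (real_inner_self_eq_norm_sq v).symm
  rw [h, h, h, h]
  simp only [inner_add_left, inner_add_right, inner_sub_left, inner_sub_right,
    real_inner_smul_left, real_inner_smul_right, real_inner_comm a b]
  ring

lemma strong_min {E : Type*} [NormedAddCommGroup E] [InnerProductSpace ℝ E]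
    {Q : Set E} (hQ : Convex ℝ Q) {g : E → ℝ} (hg : ConvexOn ℝ Q g)
    {L : ℝ} (hL : 0 < L) {c xp : E} (hxp : xp ∈ Q)
    (hmin : ∀ z ∈ Q, g xp + (L/2)*‖xp - c‖^2 ≤ g z + (L/2)*‖z - c‖^2)
    {z : E} (hz : z ∈ Q) :
    g xp + (L/2)*‖xp - c‖^2 + (L/2)*‖z - xp‖^2 ≤ g z + (L/2)*‖z - c‖^2 := by
  have key : ∀ t : ℝ, 0 < t → t < 1 →
      g xp + (L/2)*‖xp - c‖^2 + (L/2)*(1-t)*‖xp - z‖^2 ≤ g z + (L/2)*‖z - c‖^2 := by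
    intro t ht0 ht1
    have hzt : (1-t)•xp + t•z ∈ Q := hQ hxp hz (by linarith) (le_of_lt ht0) (by ring)
    have h1 := hmin _ hzt
    have h2 : g ((1-t)•xp + t•z) ≤ (1-t)*g xp + t*g z :=
      hg.2 hxp hz (by linarith) (le_of_lt ht0) (by ring)
    have h3 : ‖((1-t)•xp + t•z) - c‖^2
        = (1-t)*‖xp - c‖^2 + t*‖z - c‖^2 - t*(1-t)*‖xp - z‖^2 := by
      have e : ((1-t)•xp + t•z) - c = (1-t)•(xp - c) + t•(z - c) := by
        simp [smul_sub, sub_smul]; abel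
      rw [e, norm_combo]
      congr 2
      abel_nf
    rw [h3] at h1
    nlinarith [h1, h2, sq_nonneg ‖xp - z‖]
  have hC : 0 ≤ ‖xp - z‖^2 := sq_nonneg _
  have main : g xp + (L/2)*‖xp - c‖^2 + (L/2)*‖xp - z‖^2 ≤ g z + (L/2)*‖z - c‖^2 := by
    refine le_of_forall_pos_le_add ?_
    intro ε hε
    set D := (L/2)*‖xp - z‖^2 with hD
    have hD0 : 0 ≤ D := by positivity
    set t : ℝ := min (ε/(D+1)) (1/2) with htdef
    have ht0 : 0 < t := lt_min (by positivity) (by norm_num)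
    have ht1 : t < 1 := lt_of_le_of_lt (min_le_right _ _) (by norm_num)
    have h := key t ht0 ht1
    have htD : t*D ≤ ε := by
      calc t*D ≤ (ε/(D+1))*D := by
            apply mul_le_mul_of_nonneg_right (min_le_left _ _) hD0
        _ ≤ ε := by
            rw [div_mul_eq_mul_div, div_le_iff₀ (by linarith)]
            nlinarith
    nlinarith
  rw [norm_sub_rev z xp]
  exact main

theorem gm_model_convergence (n : ℕ) (f : EuclideanSpace ℝ (Fin n) → ℝ)
    (Q : Set (EuclideanSpace ℝ (Fin n))) (hQconv : Convex ℝ Q) (hQclosed : IsClosed Q)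
    (hfconv : ConvexOn ℝ Q f)
    (ψ : ℕ → EuclideanSpace ℝ (Fin n) → EuclideanSpace ℝ (Fin n) → ℝ)
    (δ₁ δ₂ : ℕ → ℝ) (μ L : ℝ) (hμ : 0 ≤ μ) (hμL : μ ≤ L) (hL : 0 < L)
    (hψconv : ∀ k, ∀ x ∈ Q, ConvexOn ℝ Q (fun y => ψ k y x))
    (hψ0 : ∀ k, ∀ x ∈ Q, ψ k x x = 0)
    (hlow : ∀ k, ∀ x ∈ Q, ∀ y ∈ Q,
      f x + ψ k y x + (μ / 2) * ‖y - x‖ ^ 2 - δ₁ k ≤ f y)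
    (hup : ∀ k, ∀ x ∈ Q, ∀ y ∈ Q,
      f y ≤ f x + ψ k y x + (L / 2) * ‖y - x‖ ^ 2 + δ₂ k)
    (x : ℕ → EuclideanSpace ℝ (Fin n)) (hx : ∀ k, x k ∈ Q)
    (hargmin : ∀ k, ∀ z ∈ Q,
      ψ k (x (k + 1)) (x k) + (L / 2) * ‖x (k + 1) - x k‖ ^ 2 ≤
      ψ k z (x k) + (L / 2) * ‖z - x k‖ ^ 2)
    (xstar : EuclideanSpace ℝ (Fin n)) (hxstar : xstar ∈ Q)
    (hmin : ∀ z ∈ Q, f xstar ≤ f z)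
    (N : ℕ) (hN : 1 ≤ N) :
    f ((∑ i ∈ Finset.Icc 1 N, (1 - μ / L) ^ (N - i))⁻¹ •
        ∑ i ∈ Finset.Icc 1 N, (1 - μ / L) ^ (N - i) • x i) - f xstar ≤
      min (L * ‖x 0 - xstar‖ ^ 2 / (2 * N))
          (L * ‖x 0 - xstar‖ ^ 2 / 2 * Real.exp (-(μ / L) * N))
        + (∑ i ∈ Finset.Icc 1 N, (1 - μ / L) ^ (N - i))⁻¹ *
            ∑ i ∈ Finset.Icc 1 N, (1 - μ / L) ^ (N - i) * (δ₁ (i - 1) + δ₂ (i - 1)) := by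
  set q : ℝ := 1 - μ / L with hqdef
  have hq0 : 0 ≤ q := by
    have : μ / L ≤ 1 := (div_le_one hL).mpr hμL
    simp only [hqdef]; linarith
  have hq1 : q ≤ 1 := by
    have : 0 ≤ μ / L := div_nonneg hμ hL.le
    simp only [hqdef]; linarith
  set r : ℕ → ℝ := fun j => ‖x j - xstar‖^2 with hrdef
  have hr0 : ∀ j, 0 ≤ r j := fun j => sq_nonneg _
  have step : ∀ k, f (x (k+1)) - f xstar ≤ (L/2)*(q * r k - r (k+1)) + (δ₁ k + δ₂ k) := by
    intro k
    have hsm := strong_min hQconv (hψconv k (x k) (hx k)) hL (hx (k+1))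
      (hargmin k) hxstar
    have h1 := hup k (x k) (hx k) (x (k+1)) (hx (k+1))
    have h2 := hlow k (x k) (hx k) xstar hxstar
    rw [norm_sub_rev xstar (x k)] at h2 hsm
    rw [norm_sub_rev xstar (x (k+1))] at hsm
    have hq : (L/2)*(q * r k) = (L/2)*(r k) - (μ/2)*(r k) := by
      simp only [hqdef, hrdef]; field_simp
    simp only [hrdef] at *
    linarith
  have hw0 : ∀ i : ℕ, (0:ℝ) ≤ q^(N-i) := fun i => pow_nonneg hq0 _
  set S : ℝ := ∑ i ∈ Finset.Icc 1 N, q^(N-i) with hSdef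
  have hNmem : N ∈ Finset.Icc 1 N := Finset.mem_Icc.mpr ⟨hN, le_refl N⟩
  have hS1 : 1 ≤ S := by
    have := Finset.single_le_sum (f := fun i => q^(N-i)) (fun i _ => hw0 i) hNmem
    simpa using this
  have hSpos : 0 < S := lt_of_lt_of_le one_pos hS1
  have hNpos : (0:ℝ) < N := by exact_mod_cast hN
  have hSN : (N:ℝ) * q^N ≤ S := by
    have hterm : ∀ i ∈ Finset.Icc 1 N, q^N ≤ q^(N-i) := fun i _ =>
      pow_le_pow_of_le_one hq0 hq1 (Nat.sub_le N i)
    calc (N:ℝ) * q^N = (Finset.Icc 1 N).card • q^N := by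
          simp [Nat.card_Icc, nsmul_eq_mul]
      _ ≤ S := Finset.card_nsmul_le_sum _ _ _ hterm
  -- Jensen
  have jensen : f (S⁻¹ • ∑ i ∈ Finset.Icc 1 N, q^(N-i) • x i)
      ≤ S⁻¹ * ∑ i ∈ Finset.Icc 1 N, q^(N-i) * f (x i) := by
    have := hfconv.map_centerMass_le (t := Finset.Icc 1 N) (w := fun i => q^(N-i)) (p := x)
      (fun i _ => hw0 i) (by rwa [← hSdef]) (fun i _ => hx i)
    simp only [Finset.centerMass, Function.comp, smul_eq_mul, ← hSdef] at this
    exact this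
  -- telescoping
  have tele : ∑ i ∈ Finset.Icc 1 N, q^(N-i) * ((L/2)*(q * r (i-1) - r i))
      = (L/2) * (q^N * r 0 - r N) := by
    have h1 : ∑ i ∈ Finset.Icc 1 N, q^(N-i) * ((L/2)*(q * r (i-1) - r i))
        = ∑ j ∈ Finset.range N, ((L/2) * (q^(N-j) * r j) - (L/2) * (q^(N-(j+1)) * r (j+1))) := by
      rw [← Finset.Ico_add_one_right_eq_Icc, Finset.sum_Ico_eq_sum_range]
      apply Finset.sum_congr rfl
      intro j hj
      have hjN : j < N := Finset.mem_range.mp hj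
      have hpow : q^(N-(1+j)) * q = q^(N-j) := by
        rw [← pow_succ]
        congr 1
        omega
      have e1 : 1 + j - 1 = j := by omega
      have e2 : N - (1+j) = N - (j+1) := by omega
      rw [e1, e2]
      rw [← e2, ← hpow]
      ring
    rw [h1, Finset.sum_range_sub' (fun j => (L/2) * (q^(N-j) * r j)) N]
    simp only [Nat.sub_zero, Nat.sub_self, pow_zero, one_mul]
    ring
  -- summed inequality
  have sumstep : ∑ i ∈ Finset.Icc 1 N, q^(N-i) * (f (x i) - f xstar)
      ≤ (L/2)*(q^N * r 0) + ∑ i ∈ Finset.Icc 1 N, q^(N-i) * (δ₁ (i-1) + δ₂ (i-1)) := by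
    have h : ∑ i ∈ Finset.Icc 1 N, q^(N-i) * (f (x i) - f xstar)
        ≤ ∑ i ∈ Finset.Icc 1 N, (q^(N-i) * ((L/2)*(q * r (i-1) - r i))
            + q^(N-i) * (δ₁ (i-1) + δ₂ (i-1))) := by
      apply Finset.sum_le_sum
      intro i hi
      obtain ⟨h1i, _⟩ := Finset.mem_Icc.mp hi
      have hst := step (i-1)
      have e : i - 1 + 1 = i := by omega
      rw [e] at hst
      calc q^(N-i) * (f (x i) - f xstar)
          ≤ q^(N-i) * ((L/2)*(q * r (i-1) - r i) + (δ₁ (i-1) + δ₂ (i-1))) :=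
            mul_le_mul_of_nonneg_left hst (hw0 i)
        _ = q^(N-i) * ((L/2)*(q * r (i-1) - r i)) + q^(N-i) * (δ₁ (i-1) + δ₂ (i-1)) := by ring
    rw [Finset.sum_add_distrib, tele] at h
    have : (L/2) * (q^N * r 0 - r N) ≤ (L/2)*(q^N * r 0) := by
      have := hr0 N
      nlinarith
    linarith
  -- assemble
  have hSinv : 0 ≤ S⁻¹ := inv_nonneg.mpr hSpos.le
  have hsplit : ∑ i ∈ Finset.Icc 1 N, q^(N-i) * (f (x i) - f xstar)
      = (∑ i ∈ Finset.Icc 1 N, q^(N-i) * f (x i)) - S * f xstar := by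
    rw [hSdef, Finset.sum_mul]
    rw [← Finset.sum_sub_distrib]
    apply Finset.sum_congr rfl
    intro i _
    ring
  have hmain : f (S⁻¹ • ∑ i ∈ Finset.Icc 1 N, q^(N-i) • x i) - f xstar
      ≤ (L * r 0 / 2) * (q^N * S⁻¹)
        + S⁻¹ * ∑ i ∈ Finset.Icc 1 N, q^(N-i) * (δ₁ (i-1) + δ₂ (i-1)) := by
    have h1 : f (S⁻¹ • ∑ i ∈ Finset.Icc 1 N, q^(N-i) • x i) - f xstar
        ≤ S⁻¹ * ∑ i ∈ Finset.Icc 1 N, q^(N-i) * (f (x i) - f xstar) := by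
      rw [hsplit, mul_sub, ← mul_assoc, inv_mul_cancel₀ hSpos.ne', one_mul]
      linarith [jensen]
    have h2 : S⁻¹ * ∑ i ∈ Finset.Icc 1 N, q^(N-i) * (f (x i) - f xstar)
        ≤ S⁻¹ * ((L/2)*(q^N * r 0) + ∑ i ∈ Finset.Icc 1 N, q^(N-i) * (δ₁ (i-1) + δ₂ (i-1))) :=
      mul_le_mul_of_nonneg_left sumstep hSinv
    calc f (S⁻¹ • ∑ i ∈ Finset.Icc 1 N, q^(N-i) • x i) - f xstar
        ≤ S⁻¹ * ((L/2)*(q^N * r 0) + ∑ i ∈ Finset.Icc 1 N, q^(N-i) * (δ₁ (i-1) + δ₂ (i-1))) :=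
          le_trans h1 h2
      _ = (L * r 0 / 2) * (q^N * S⁻¹)
          + S⁻¹ * ∑ i ∈ Finset.Icc 1 N, q^(N-i) * (δ₁ (i-1) + δ₂ (i-1)) := by ring
  -- bound the first term by the min
  have hminbound : (L * r 0 / 2) * (q^N * S⁻¹)
      ≤ min (L * r 0 / (2 * N)) (L * r 0 / 2 * Real.exp (-(μ/L) * N)) := by
    have hLr : 0 ≤ L * r 0 / 2 := by positivity
    refine le_min ?_ ?_
    · have hfrac : q^N * S⁻¹ ≤ 1/N := by
        rw [← div_eq_mul_inv, div_le_div_iff₀ hSpos hNpos]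
        nlinarith
      calc (L * r 0 / 2) * (q^N * S⁻¹) ≤ (L * r 0 / 2) * (1/N) :=
            mul_le_mul_of_nonneg_left hfrac hLr
        _ = L * r 0 / (2 * N) := by ring
    · have hqe : q ≤ Real.exp (-(μ/L)) := by
        have := Real.add_one_le_exp (-(μ/L))
        simp only [hqdef]; linarith
      have hqN : q^N ≤ Real.exp (-(μ/L) * N) := by
        calc q^N ≤ (Real.exp (-(μ/L)))^N := pow_le_pow_left₀ hq0 hqe N
          _ = Real.exp (-(μ/L) * N) := by
              rw [← Real.exp_nat_mul, mul_comm]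
      have hSi1 : S⁻¹ ≤ 1 := inv_le_one_of_one_le₀ hS1
      have : q^N * S⁻¹ ≤ Real.exp (-(μ/L) * N) := by
        calc q^N * S⁻¹ ≤ q^N * 1 := mul_le_mul_of_nonneg_left hSi1 (pow_nonneg hq0 N)
          _ = q^N := mul_one _
          _ ≤ _ := hqN
      calc (L * r 0 / 2) * (q^N * S⁻¹) ≤ (L * r 0 / 2) * Real.exp (-(μ/L) * N) :=
            mul_le_mul_of_nonneg_left this hLr
        _ = L * r 0 / 2 * Real.exp (-(μ/L) * N) := by ring
  simp only [hrdef] at hminbound hmain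
  linarith [hmain, hminbound]
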